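/- If the d-improved graph G^⟨d⟩ of G contains a clique of size at least d+1, then td(G) > d. -/

import Mathlib

structure RootedForest (V : Type) where
  parent : V → Option V
  vdepth : V → ℕ
  vdepth_root : ∀ v, parent v = none → vdepth v = 1
  vdepth_parent : ∀ v p, parent v = some p → vdepth v = vdepth p + 1

namespace RootedForest

variable {V : Type}

/-- `F.Anc u v` means `u` is an ancestor of `v` (reflexively). -/
def Anc (F : RootedForest V) (u v : V) : Prop :=
  Relation.ReflTransGen (fun a b => F.parent a = some b) v u

/-- ancestors of `u`, including `u` itself. -/
def tail (F : RootedForest V) (u : V) : Set V := {w | F.Anc w u}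

/-- descendants of `u`, including `u` itself. -/
def desc (F : RootedForest V) (u : V) : Set V := {w | F.Anc u w}

def comp (F : RootedForest V) (u : V) : Set V := F.tail u ∪ F.desc u

/-- ancestor closure of a set of vertices. -/
def cl (F : RootedForest V) (A : Set V) : Set V := ⋃ u ∈ A, F.tail u

/-- children of `u`. -/
def chld (F : RootedForest V) (u : V) : Set V := {v | F.parent v = some u}

/-- the forest has depth at most `d`. -/
def DepthLE (F : RootedForest V) (d : ℕ) : Prop := ∀ v, F.vdepth v ≤ d

/-- the forest consists of a single tree. -/
def IsTree (F : RootedForest V) : Prop := ∃ r, ∀ v, F.Anc r v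

end RootedForest

/-- `F` is an elimination forest of `G`: every edge joins an ancestor/descendant pair. -/
def SimpleGraph.IsElimForest {V : Type} (G : SimpleGraph V) (F : RootedForest V) : Prop :=
  ∀ u v, G.Adj u v → F.Anc u v ∨ F.Anc v u

/-- the treedepth of a graph. -/
noncomputable def SimpleGraph.treedepth {V : Type} (G : SimpleGraph V) : ℕ :=
  sInf {d | ∃ F : RootedForest V, G.IsElimForest F ∧ F.DepthLE d}

/-- The `d`-improved graph of `G`: add an edge between every pair of non-adjacent
vertices having at least `d+1` common neighbours of degree at most `d` in `G`. -/
def improvedGraph {V : Type} [Fintype V] [DecidableEq V] (G : SimpleGraph V)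
    [DecidableRel G.Adj] (d : ℕ) : SimpleGraph V :=
  SimpleGraph.fromRel (fun u v => G.Adj u v ∨
    d + 1 ≤ (Finset.univ.filter (fun w => G.Adj u w ∧ G.Adj v w ∧ G.degree w ≤ d)).card)

namespace RootedForest

variable {V : Type}

lemma depth_mono' (F : RootedForest V) {a b : V}
    (h : Relation.ReflTransGen (fun a b => F.parent a = some b) a b) :
    b = a ∨ F.vdepth b < F.vdepth a := by
  induction h with
  | refl => exact Or.inl rfl
  | tail hac hcb ih =>
      right
      have h2 := F.vdepth_parent _ _ hcb
      rcases ih with rfl | h' <;> omega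

lemma rtg_total (F : RootedForest V) {u w1 w2 : V}
    (h1 : Relation.ReflTransGen (fun a b => F.parent a = some b) u w1)
    (h2 : Relation.ReflTransGen (fun a b => F.parent a = some b) u w2) :
    Relation.ReflTransGen (fun a b => F.parent a = some b) w1 w2 ∨
    Relation.ReflTransGen (fun a b => F.parent a = some b) w2 w1 := by
  revert h2
  induction h1 using Relation.ReflTransGen.head_induction_on with
  | refl => exact fun h2 => Or.inl h2
  | head hac hcb ih =>
      intro h2
      rcases h2.cases_head with rfl | ⟨c', hac', hcb'⟩
      · exact Or.inr (Relation.ReflTransGen.head hac hcb)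
      · rw [hac] at hac'
        obtain rfl := Option.some.inj hac'
        exact ih hcb'

lemma anc_depth_inj (F : RootedForest V) {u w1 w2 : V} (h1 : F.Anc w1 u) (h2 : F.Anc w2 u)
    (hd : F.vdepth w1 = F.vdepth w2) : w1 = w2 := by
  rcases F.rtg_total h1 h2 with h | h
  · rcases F.depth_mono' h with h' | h'
    · exact h'.symm
    · omega
  · rcases F.depth_mono' h with h' | h'
    · exact h'
    · omega

lemma one_le_vdepth (F : RootedForest V) (v : V) : 1 ≤ F.vdepth v := by
  cases h : F.parent v with
  | none => rw [F.vdepth_root v h]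
  | some p => rw [F.vdepth_parent v p h]; omega

end RootedForest

section Main

variable {V : Type} [Fintype V] [DecidableEq V]

lemma improved_comparable (G : SimpleGraph V) [DecidableRel G.Adj] {F : RootedForest V} {d : ℕ}
    (hF : G.IsElimForest F) (hd : F.DepthLE d) {u v : V}
    (hc : d + 1 ≤ (Finset.univ.filter (fun w => G.Adj u w ∧ G.Adj v w ∧ G.degree w ≤ d)).card) :
    F.Anc u v ∨ F.Anc v u := by
  by_contra hnc
  push_neg at hnc
  obtain ⟨h1, h2⟩ := hnc
  set W := Finset.univ.filter (fun w => G.Adj u w ∧ G.Adj v w ∧ G.degree w ≤ d) with hW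
  have hanc : ∀ w ∈ W, F.Anc w u ∧ w ≠ u := by
    intro w hw
    rw [hW, Finset.mem_filter] at hw
    obtain ⟨-, hu, hv, -⟩ := hw
    rcases hF u w hu with cu | cu
    · rcases hF v w hv with cv | cv
      · rcases F.rtg_total cu cv with h | h
        · exact absurd h h2
        · exact absurd h h1
      · exact absurd (cv.trans cu) h1
    · exact ⟨cu, fun he => G.ne_of_adj hu he.symm⟩
  have hinj : Set.InjOn F.vdepth ↑W := fun w1 hw1 w2 hw2 hd' =>
    F.anc_depth_inj (hanc w1 hw1).1 (hanc w2 hw2).1 hd'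
  have hsub : W.image F.vdepth ⊆ Finset.range d := by
    intro n hn
    rw [Finset.mem_image] at hn
    obtain ⟨w, hw, rfl⟩ := hn
    obtain ⟨ha, hne⟩ := hanc w hw
    have hdm := F.depth_mono' ha
    have hu := hd u
    rw [Finset.mem_range]
    rcases hdm with rfl | hlt
    · exact absurd rfl hne
    · omega
  have h3 := Finset.card_image_of_injOn hinj
  have h4 := Finset.card_le_card hsub
  rw [Finset.card_range] at h4
  omega

lemma isElimForest_improved (G : SimpleGraph V) [DecidableRel G.Adj] {F : RootedForest V} {d : ℕ}
    (hF : G.IsElimForest F) (hd : F.DepthLE d) :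
    (improvedGraph G d).IsElimForest F := by
  intro u v huv
  rw [improvedGraph, SimpleGraph.fromRel_adj] at huv
  obtain ⟨hne, h | h⟩ := huv
  · rcases h with h | h
    · exact hF u v h
    · exact improved_comparable G hF hd h
  · rcases h with h | h
    · exact (hF v u h).symm
    · exact (improved_comparable G hF hd h).symm

lemma clique_contra {F : RootedForest V} {H : SimpleGraph V} (hF : H.IsElimForest F) {d : ℕ}
    (hd : F.DepthLE d) {s : Finset V} (hs : H.IsClique (s : Set V))
    (hcard : d + 1 ≤ s.card) : False := by
  have hinj : Set.InjOn F.vdepth ↑s := by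
    intro w1 hw1 w2 hw2 hdep
    by_contra hne
    have hadj := hs hw1 hw2 hne
    rcases hF _ _ hadj with h | h <;>
      rcases F.depth_mono' h with h' | h' <;> first | exact hne h'.symm | exact hne h' | omega
  have hsub : s.image F.vdepth ⊆ Finset.Icc 1 d := by
    intro n hn
    rw [Finset.mem_image] at hn
    obtain ⟨w, hw, rfl⟩ := hn
    rw [Finset.mem_Icc]
    exact ⟨F.one_le_vdepth w, hd w⟩
  have h3 := Finset.card_image_of_injOn hinj
  have h4 := Finset.card_le_card hsub
  rw [Nat.card_Icc] at h4
  omega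

noncomputable def pathForest (V : Type) [Fintype V] [DecidableEq V] : RootedForest V where
  parent v := if _ : (Fintype.equivFin V v : ℕ) = 0 then none
    else some ((Fintype.equivFin V).symm ⟨(Fintype.equivFin V v : ℕ) - 1,
      by have := (Fintype.equivFin V v).isLt; omega⟩)
  vdepth v := (Fintype.equivFin V v : ℕ) + 1
  vdepth_root := by
    intro v h
    by_cases hc : (Fintype.equivFin V v : ℕ) = 0
    · omega
    · rw [dif_neg hc] at h; simp at h
  vdepth_parent := by
    intro v p h
    by_cases hc : (Fintype.equivFin V v : ℕ) = 0
    · rw [dif_pos hc] at h; simp at h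
    · rw [dif_neg hc] at h
      obtain rfl := (Option.some.inj h).symm
      simp only [Equiv.apply_symm_apply]
      omega

lemma pathForest_anc (V : Type) [Fintype V] [DecidableEq V] :
    ∀ n (v u : V), (Fintype.equivFin V v : ℕ) = n → (Fintype.equivFin V u : ℕ) ≤ n →
      (pathForest V).Anc u v := by
  intro n
  induction n with
  | zero =>
      intro v u hv hu
      have : u = v := (Fintype.equivFin V).injective (Fin.ext (by omega))
      exact this ▸ Relation.ReflTransGen.refl
  | succ n ih =>
      intro v u hv hu
      by_cases h : (Fintype.equivFin V u : ℕ) = n + 1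
      · have : u = v := (Fintype.equivFin V).injective (Fin.ext (by omega))
        exact this ▸ Relation.ReflTransGen.refl
      · have hlt : n < Fintype.card V := by
          have := (Fintype.equivFin V v).isLt; omega
        have hfin : (⟨(Fintype.equivFin V v : ℕ) - 1,
            by have := (Fintype.equivFin V v).isLt; omega⟩ : Fin (Fintype.card V)) = ⟨n, hlt⟩ :=
          Fin.ext (by show (Fintype.equivFin V v : ℕ) - 1 = n; omega)
        have hpar : (pathForest V).parent v =
            some ((Fintype.equivFin V).symm ⟨n, hlt⟩) := by
          show (if _ : (Fintype.equivFin V v : ℕ) = 0 then none else _) = _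
          rw [dif_neg (by omega : ¬ ((Fintype.equivFin V v : ℕ) = 0)), hfin]
        have hrec := ih ((Fintype.equivFin V).symm ⟨n, hlt⟩) u (by simp) (by omega)
        exact Relation.ReflTransGen.head hpar hrec

lemma pathForest_elim (G : SimpleGraph V) : G.IsElimForest (pathForest V) := by
  intro u v _
  rcases le_total (Fintype.equivFin V u : ℕ) (Fintype.equivFin V v : ℕ) with h | h
  · exact Or.inl (pathForest_anc V _ v u rfl h)
  · exact Or.inr (pathForest_anc V _ u v rfl h)

lemma pathForest_depth : (pathForest V).DepthLE (Fintype.card V) := by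
  intro v
  show (Fintype.equivFin V v : ℕ) + 1 ≤ _
  have := (Fintype.equivFin V v).isLt
  omega

end Main

theorem treedepth_gt_of_improved_clique {V : Type} [Fintype V] [DecidableEq V]
    (G : SimpleGraph V) [DecidableRel G.Adj] (d : ℕ)
    (h : ∃ s : Finset V, (improvedGraph G d).IsClique (s : Set V) ∧ d + 1 ≤ s.card) :
    d < G.treedepth := by
  obtain ⟨s, hclique, hcard⟩ := h
  by_contra hle
  push_neg at hle
  have hne : {n | ∃ F : RootedForest V, G.IsElimForest F ∧ F.DepthLE n}.Nonempty :=
    ⟨Fintype.card V, pathForest V, pathForest_elim G, pathForest_depth⟩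
  have hmem := Nat.sInf_mem hne
  obtain ⟨F, hF, hdF⟩ := hmem
  have hdF' : F.DepthLE d := fun v => le_trans (hdF v) hle
  exact clique_contra (isElimForest_improved G hF hdF') hdF' hclique hcard
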